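/- For any ζ ∈ ℂ, η ∈ ℂ, and r > 0, the quantity F_r(η) = (1/(π r²)) ∫_{D(ζ,r)} |z - ζ|/|z - η| dL(z) satisfies F_r(η) ≤ 2, where dL is Lebesgue measure on ℂ and D(ζ,r) is the open disk of center ζ and radius r. -/

import Mathlib

open MeasureTheory Metric Set Filter

lemma key_bound (ζ η : ℂ) (r : ℝ) (hr : 0 < r) :
    (∫⁻ z in ball ζ r, (ENNReal.ofReal (‖z - η‖))⁻¹ ∂volume)
      ≤ ENNReal.ofReal (2 * Real.pi * r) := by
  have hballvol : ∀ (c : ℂ) (s : ℝ), 0 ≤ s →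
      volume (ball c s) = ENNReal.ofReal (Real.pi * s ^ 2) := by
    intro c s hs
    rw [Complex.volume_ball, ← ENNReal.ofReal_pow hs,
      ← NNReal.coe_real_pi, ENNReal.ofReal_coe_nnreal.symm, ← ENNReal.ofReal_mul (by positivity),
      mul_comm]
  set μ := volume.restrict (ball ζ r) with hμ
  have hmble : AEMeasurable (fun z : ℂ => (‖z - η‖)⁻¹) μ :=
    (((measurable_id.sub_const η).norm).inv).aemeasurable
  have hnull : μ {η} = 0 :=
    le_antisymm (le_trans (Measure.restrict_apply_le _ _)
      (le_of_eq (measure_singleton η))) zero_le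
  have hcongr : (∫⁻ z in ball ζ r, (ENNReal.ofReal (‖z - η‖))⁻¹ ∂volume)
      = ∫⁻ z, ENNReal.ofReal ((‖z - η‖)⁻¹) ∂μ := by
    refine lintegral_congr_ae ?_
    filter_upwards [compl_mem_ae_iff.2 hnull] with z hz
    have hzη : z ≠ η := hz
    have habs : 0 < ‖z - η‖ := by
      simpa [sub_eq_zero] using hzη
    exact (ENNReal.ofReal_inv_of_pos habs).symm
  rw [hcongr]
  rw [lintegral_eq_lintegral_meas_lt μ (Eventually.of_forall fun z => inv_nonneg.2 (by positivity))
    hmble]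
  have hsplit : Ioi (0:ℝ) = Ioc 0 r⁻¹ ∪ Ioi r⁻¹ := (Ioc_union_Ioi_eq_Ioi (by positivity)).symm
  rw [hsplit, lintegral_union measurableSet_Ioi Ioc_disjoint_Ioi_same]
  have h1 : (∫⁻ t in Ioc (0:ℝ) r⁻¹, μ {z | t < (‖z - η‖)⁻¹})
      ≤ ENNReal.ofReal (Real.pi * r) := by
    calc (∫⁻ t in Ioc (0:ℝ) r⁻¹, μ {z | t < (‖z - η‖)⁻¹})
        ≤ ∫⁻ _ in Ioc (0:ℝ) r⁻¹, ENNReal.ofReal (Real.pi * r ^ 2) := by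
          refine lintegral_mono fun t => ?_
          calc μ {z | t < (‖z - η‖)⁻¹} ≤ μ univ := measure_mono (subset_univ _)
            _ = ENNReal.ofReal (Real.pi * r ^ 2) := by
                rw [hμ, Measure.restrict_apply_univ, hballvol _ _ hr.le]
      _ = ENNReal.ofReal (Real.pi * r ^ 2) * volume (Ioc (0:ℝ) r⁻¹) := setLIntegral_const _ _
      _ = ENNReal.ofReal (Real.pi * r) := by
          rw [Real.volume_Ioc, ← ENNReal.ofReal_mul (by positivity)]
          congr 1
          field_simp
          ring
  have h2 : (∫⁻ t in Ioi r⁻¹, μ {z | t < (‖z - η‖)⁻¹})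
      ≤ ENNReal.ofReal (Real.pi * r) := by
    have hptw : ∀ t ∈ Ioi r⁻¹, μ {z | t < (‖z - η‖)⁻¹}
        ≤ ENNReal.ofReal (Real.pi * (t⁻¹) ^ 2) := by
      intro t ht
      have ht0 : (0:ℝ) < t := lt_trans (by positivity) ht
      have hsub : {z : ℂ | t < (‖z - η‖)⁻¹} ⊆ ball η t⁻¹ := by
        intro z hz
        simp only [mem_setOf_eq] at hz
        rw [mem_ball, Complex.dist_eq]
        rcases eq_or_lt_of_le (norm_nonneg (z - η)) with h0 | h0
        · rw [← h0]; positivity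
        · exact (lt_inv_comm₀ ht0 h0).1 hz
      calc μ {z | t < (‖z - η‖)⁻¹} ≤ volume (ball η t⁻¹) :=
            le_trans (Measure.restrict_apply_le _ _) (measure_mono hsub)
        _ = ENNReal.ofReal (Real.pi * (t⁻¹) ^ 2) := hballvol _ _ (by positivity)
    calc (∫⁻ t in Ioi r⁻¹, μ {z | t < (‖z - η‖)⁻¹})
        ≤ ∫⁻ t in Ioi r⁻¹, ENNReal.ofReal (Real.pi * t ^ (-2:ℝ)) := by
          refine setLIntegral_mono_ae (by fun_prop) (Eventually.of_forall fun t ht => ?_)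
          have ht0 : (0:ℝ) < t := lt_trans (by positivity) ht
          have heq : t ^ (-2:ℝ) = (t⁻¹) ^ 2 := by
            rw [show (-2:ℝ) = ((-2:ℤ):ℝ) by norm_num, Real.rpow_intCast]
            simp only [zpow_neg, inv_pow, inv_inj]
            norm_cast
          rw [heq]
          exact hptw t ht
      _ = ENNReal.ofReal (Real.pi * r) := by
          rw [← ofReal_integral_eq_lintegral_ofReal]
          · congr 1
            rw [integral_const_mul, integral_Ioi_rpow_of_lt (by norm_num) (by positivity)]
            rw [show (-2:ℝ) + 1 = -1 by norm_num, Real.rpow_neg_one, inv_inv]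
            ring
          · exact (integrableOn_Ioi_rpow_of_lt (by norm_num) (by positivity)).const_mul Real.pi
          · filter_upwards [self_mem_ae_restrict measurableSet_Ioi] with t ht
            have ht0 : (0:ℝ) < t := lt_trans (by positivity) ht
            positivity
  calc _ ≤ ENNReal.ofReal (Real.pi * r) + ENNReal.ofReal (Real.pi * r) := add_le_add h1 h2
    _ = ENNReal.ofReal (2 * Real.pi * r) := by
        rw [← ENNReal.ofReal_add (by positivity) (by positivity)]; ring_nf

theorem stmt_2 (ζ η : ℂ) (r : ℝ) (hr : 0 < r) :
    (∫⁻ z in ball ζ r,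
        ENNReal.ofReal (‖z - ζ‖) / ENNReal.ofReal (‖z - η‖) ∂volume)
      / ENNReal.ofReal (Real.pi * r ^ 2) ≤ 2 := by
  have hpos : (0:ℝ) < Real.pi * r ^ 2 := by positivity
  rw [ENNReal.div_le_iff (ENNReal.ofReal_pos.2 hpos).ne' ENNReal.ofReal_ne_top]
  have hm : Measurable fun z : ℂ =>
      ENNReal.ofReal r / ENNReal.ofReal (‖z - η‖) :=
    measurable_const.div (ENNReal.measurable_ofReal.comp ((measurable_id.sub_const η).norm))
  calc (∫⁻ z in ball ζ r,
        ENNReal.ofReal (‖z - ζ‖) / ENNReal.ofReal (‖z - η‖) ∂volume)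
      ≤ ∫⁻ z in ball ζ r,
          ENNReal.ofReal r / ENNReal.ofReal (‖z - η‖) ∂volume := by
        refine setLIntegral_mono_ae hm.aemeasurable (Eventually.of_forall fun z hz => ?_)
        exact ENNReal.div_le_div_right (ENNReal.ofReal_le_ofReal
          (by rw [← Complex.dist_eq]; exact (mem_ball.1 hz).le)) _
    _ = ENNReal.ofReal r *
          ∫⁻ z in ball ζ r, (ENNReal.ofReal (‖z - η‖))⁻¹ ∂volume := by
        simp_rw [div_eq_mul_inv]
        exact lintegral_const_mul' _ _ ENNReal.ofReal_ne_top
    _ ≤ ENNReal.ofReal r * ENNReal.ofReal (2 * Real.pi * r) :=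
        mul_le_mul_right (key_bound ζ η r hr) _
    _ ≤ 2 * ENNReal.ofReal (Real.pi * r ^ 2) := by
        rw [← ENNReal.ofReal_mul hr.le, ← ENNReal.ofReal_ofNat,
          ← ENNReal.ofReal_mul (by norm_num)]
        exact ENNReal.ofReal_le_ofReal (le_of_eq (by ring))
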